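/- Test lemma for ℵ₁-free quotients: let U ⊆ G be abelian groups such that every countable subset of G is contained in a countable subgroup X of G which is free with a basis B₁ ∪ B₂ where B₁ ⊆ U and U ∩ ⟨B₂⟩ = 0. Then G/U is ℵ₁-free. -/

import Mathlib

open Finsupp Submodule

def Aleph1Free (G : Type*) [AddCommGroup G] : Prop :=
  ∀ H : AddSubgroup G, Countable H → Module.Free ℤ H

theorem free_submodule_finsupp_nat (N : Submodule ℤ (ℕ →₀ ℤ)) : Module.Free ℤ ↥N := by
  classical
  set Mn : ℕ → Submodule ℤ (ℕ →₀ ℤ) := fun n => N ⊓ Finsupp.supported ℤ ℤ (Set.Iio n) with hMn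
  set I : ℕ → Ideal ℤ := fun n => (Mn (n+1)).map (Finsupp.lapply n) with hI
  set a : ℕ → ℤ := fun n => Submodule.IsPrincipal.generator (I n) with ha
  have hspan : ∀ n, Ideal.span {a n} = I n := fun n =>
    Submodule.IsPrincipal.span_singleton_generator (I n)
  have hxex : ∀ n, ∃ y, y ∈ Mn (n+1) ∧ y n = a n := by
    intro n
    have : a n ∈ I n := Submodule.IsPrincipal.generator_mem (I n)
    obtain ⟨y, hy, hyn⟩ := Submodule.mem_map.mp this
    exact ⟨y, hy, hyn⟩
  choose x hx1 hx2 using hxex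
  have hxN : ∀ n, x n ∈ N := fun n => (hx1 n).1
  have hxsupp : ∀ n m, n < m → x n m = 0 := by
    intro n m hm
    have := (hx1 n).2
    rw [SetLike.mem_coe, Finsupp.mem_supported'] at this
    exact this m (by simpa using hm)
  -- the candidate basis family
  set v : {n : ℕ // a n ≠ 0} → (ℕ →₀ ℤ) := fun k => x k with hv
  -- linear independence
  have hli : LinearIndependent ℤ v := by
    rw [linearIndependent_iff']
    have key : ∀ n (s : Finset {n : ℕ // a n ≠ 0}) (g : {n : ℕ // a n ≠ 0} → ℤ),
        (∀ i ∈ s, (i : ℕ) < n) → ∑ i ∈ s, g i • v i = 0 → ∀ i ∈ s, g i = 0 := by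
      intro n
      induction n with
      | zero => intro s g hlt _ i hi; exact absurd (hlt i hi) (Nat.not_lt_zero _)
      | succ n ih =>
        intro s g hlt hsum i hi
        by_cases hex : ∃ i₀ ∈ s, (i₀ : ℕ) = n
        · obtain ⟨i₀, hi₀s, hi₀n⟩ := hex
          have hg0 : g i₀ = 0 := by
            have happ := congrArg (fun f : ℕ →₀ ℤ => f n) hsum
            simp only [Finsupp.coe_zero, Pi.zero_apply] at happ
            rw [Finset.sum_apply'] at happ
            have hterm : ∀ j ∈ s, (g j • v j) n = if j = i₀ then g i₀ * a n else 0 := by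
              intro j hj
              by_cases hji : j = i₀
              · subst hji
                rw [if_pos rfl, Finsupp.smul_apply, smul_eq_mul]
                rw [← hi₀n, hx2]
              · rw [if_neg hji, Finsupp.smul_apply, smul_eq_mul]
                have hjn : (j : ℕ) ≠ n := by
                  intro hcon
                  exact hji (Subtype.ext (hcon.trans hi₀n.symm))
                have : (j : ℕ) < n := lt_of_le_of_ne (Nat.lt_succ_iff.mp (hlt j hj)) hjn
                rw [hv]
                rw [hxsupp _ _ this, mul_zero]
            rw [Finset.sum_congr rfl hterm, Finset.sum_ite_eq' s i₀, if_pos hi₀s] at happ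
            have := mul_eq_zero.mp happ
            rcases this with h | h
            · exact h
            · exact absurd (hi₀n ▸ i₀.2) (fun hne => hne h)
          have hsum' : ∑ j ∈ s.erase i₀, g j • v j = 0 := by
            rw [← Finset.add_sum_erase s _ hi₀s] at hsum
            rw [hg0, zero_smul, zero_add] at hsum
            exact hsum
          have hlt' : ∀ j ∈ s.erase i₀, (j : ℕ) < n := by
            intro j hj
            have hjs := Finset.mem_of_mem_erase hj
            have hjne := Finset.ne_of_mem_erase hj
            have hjn : (j : ℕ) ≠ n := fun hcon => hjne (Subtype.ext (hcon.trans hi₀n.symm))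
            exact lt_of_le_of_ne (Nat.lt_succ_iff.mp (hlt j hjs)) hjn
          by_cases hii : i = i₀
          · rw [hii]; exact hg0
          · exact ih (s.erase i₀) g hlt' hsum' i (Finset.mem_erase.mpr ⟨hii, hi⟩)
        · push_neg at hex
          have hlt' : ∀ j ∈ s, (j : ℕ) < n := fun j hj =>
            lt_of_le_of_ne (Nat.lt_succ_iff.mp (hlt j hj)) (hex j hj)
          exact ih s g hlt' hsum i hi
    intro s g hsum i hi
    obtain ⟨n, hn⟩ : ∃ n, ∀ i ∈ s, (i : ℕ) < n :=
      ⟨(s.sup fun i => (i : ℕ)) + 1, fun i hi => Nat.lt_succ_of_le (Finset.le_sup hi)⟩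
    exact key n s g hn hsum i hi
  -- spanning
  have hMnle : ∀ n, Mn n ≤ Submodule.span ℤ (Set.range v) := by
    intro n
    induction n with
    | zero =>
      intro f hf
      have : f = 0 := by
        ext m
        exact (Finsupp.mem_supported' ℤ f).mp hf.2 m (by simp)
      rw [this]; exact Submodule.zero_mem _
    | succ n ih =>
      intro f hf
      have hfn : f n ∈ I n := Submodule.mem_map.mpr ⟨f, hf, rfl⟩
      rw [← hspan n, Ideal.mem_span_singleton] at hfn
      obtain ⟨c, hc⟩ := hfn
      by_cases han : a n = 0
      · -- then f n = 0, so f ∈ Mn n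
        have hfn0 : f n = 0 := by rw [hc, han, zero_mul]
        apply ih
        refine ⟨hf.1, ?_⟩
        rw [SetLike.mem_coe, Finsupp.mem_supported']
        intro m hm
        simp only [Set.mem_Iio, not_lt] at hm
        rcases eq_or_lt_of_le hm with h | h
        · rw [← h]; exact hfn0
        · exact (Finsupp.mem_supported' ℤ f).mp hf.2 m (by simp [Nat.lt_succ_iff]; omega)
      · have hg : f - c • x n ∈ Mn n := by
          constructor
          · exact Submodule.sub_mem _ hf.1 (Submodule.smul_mem _ _ (hxN n))
          · rw [SetLike.mem_coe, Finsupp.mem_supported']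
            intro m hm
            simp only [Set.mem_Iio, not_lt] at hm
            rcases eq_or_lt_of_le hm with h | h
            · rw [← h]
              simp only [Finsupp.sub_apply, Finsupp.smul_apply, smul_eq_mul, hx2, hc]
              ring
            · have h1 : f m = 0 :=
                (Finsupp.mem_supported' ℤ f).mp hf.2 m (by simp; omega)
              have h2 : x n m = 0 := hxsupp n m h
              simp [h1, h2]
        have hmem : f - c • x n ∈ Submodule.span ℤ (Set.range v) := ih hg
        have hxmem : x n ∈ Submodule.span ℤ (Set.range v) :=
          Submodule.subset_span ⟨⟨n, han⟩, rfl⟩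
        have : f = (f - c • x n) + c • x n := by abel
        rw [this]
        exact Submodule.add_mem _ hmem (Submodule.smul_mem _ _ hxmem)
  have hNle : N ≤ Submodule.span ℤ (Set.range v) := by
    intro f hf
    refine hMnle ((f.support.sup id) + 1) ⟨hf, ?_⟩
    rw [SetLike.mem_coe, Finsupp.mem_supported]
    intro m hm
    simp only [Set.mem_Iio]
    exact Nat.lt_succ_of_le (Finset.le_sup (f := id) hm)
  have hge : Submodule.span ℤ (Set.range v) ≤ N := by
    rw [Submodule.span_le]
    rintro _ ⟨k, rfl⟩
    exact hxN k
  have heq : Submodule.span ℤ (Set.range v) = N := le_antisymm hge hNle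
  have : Module.Free ℤ ↥(Submodule.span ℤ (Set.range v)) := Module.Free.of_basis (Module.Basis.span hli)
  rw [heq] at this
  exact this

/-- Test lemma: if every countable subset of `G` lies inside a countable
subgroup `X` which is free with a basis `B₁ ∪ B₂` where `B₁ ⊆ U` and
`⟨B₂⟩ ∩ U = 0`, then `G/U` is ℵ₁-free. -/
theorem test_lemma_aleph1Free {G : Type*} [AddCommGroup G] (U : AddSubgroup G)
    (h : ∀ S : Set G, S.Countable → ∃ (X : AddSubgroup G) (B₁ B₂ : Set G),
      S ⊆ X ∧ Countable X ∧ B₁ ⊆ U ∧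
      AddSubgroup.closure B₂ ⊓ U = ⊥ ∧
      AddSubgroup.closure (B₁ ∪ B₂) = X ∧
      LinearIndependent ℤ (fun b : ↥(B₁ ∪ B₂) => (b : G))) :
    Aleph1Free (G ⧸ U) := by
  classical
  intro H hH
  have hrep : ∀ y : H, ∃ g : G, QuotientAddGroup.mk' U g = (y : G ⧸ U) := fun y =>
    QuotientAddGroup.mk'_surjective U (y : G ⧸ U)
  choose f hf using hrep
  obtain ⟨X, B₁, B₂, hSX, hXc, hB₁U, hdisj, hclo, hli⟩ := h _ (Set.countable_range f)
  set π := (QuotientAddGroup.mk' U).toIntLinearMap with hπ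
  have hB₂X : B₂ ⊆ (X : Set G) := by
    intro b hb; rw [← hclo]; exact AddSubgroup.subset_closure (Set.mem_union_right _ hb)
  have hB₂c : Countable ↥B₂ := by
    have : (X : Set G).Countable := Set.countable_coe_iff.mp hXc
    exact (this.mono hB₂X).to_subtype
  have hliB₂ : LinearIndependent ℤ (fun b : ↥B₂ => (b : G)) :=
    LinearIndepOn.mono (v := id) (s := B₁ ∪ B₂) hli Set.subset_union_right
  have hker : LinearMap.ker π = AddSubgroup.toIntSubmodule U := by
    rw [hπ, AddMonoidHom.coe_toIntLinearMap_ker, QuotientAddGroup.ker_mk']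
  have hdis : Disjoint (Submodule.span ℤ (Set.range (fun b : ↥B₂ => (b : G))))
      (LinearMap.ker π) := by
    rw [Subtype.range_coe, hker, _root_.disjoint_iff, eq_bot_iff]
    intro y hy
    have h1 : y ∈ AddSubgroup.closure B₂ := by
      have : y ∈ (Submodule.span ℤ B₂).toAddSubgroup := hy.1
      rwa [Submodule.span_int_eq_addSubgroupClosure] at this
    have h2 : y ∈ U := hy.2
    have : y ∈ AddSubgroup.closure B₂ ⊓ U := ⟨h1, h2⟩
    rw [hdisj] at this
    simpa using this
  have hli2 : LinearIndependent ℤ (π ∘ fun b : ↥B₂ => (b : G)) := hliB₂.map hdis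
  set NN := Submodule.span ℤ (Set.range (π ∘ fun b : ↥B₂ => (b : G))) with hNN
  have hXim : ∀ g ∈ X, π g ∈ NN := by
    intro g hg
    rw [← hclo] at hg
    induction hg using AddSubgroup.closure_induction with
    | mem b hb =>
      rcases hb with hb | hb
      · have : π b = 0 := by
          rw [← LinearMap.mem_ker, hker]
          exact hB₁U hb
        rw [this]; exact Submodule.zero_mem _
      · exact Submodule.subset_span ⟨⟨b, hb⟩, rfl⟩
    | zero => rw [map_zero]; exact Submodule.zero_mem _
    | add g₁ g₂ _ _ h1 h2 => rw [map_add]; exact Submodule.add_mem _ h1 h2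
    | neg g' _ h1 => rw [map_neg]; exact Submodule.neg_mem _ h1
  have hHle : AddSubgroup.toIntSubmodule H ≤ NN := by
    intro y hy
    have hy' : y ∈ H := hy
    have : π (f ⟨y, hy'⟩) = y := hf ⟨y, hy'⟩
    rw [← this]
    exact hXim _ (hSX ⟨⟨y, hy'⟩, rfl⟩)
  obtain ⟨emb, hemb⟩ := exists_injective_nat ↥B₂
  set F : ↥(AddSubgroup.toIntSubmodule H) →ₗ[ℤ] (ℕ →₀ ℤ) :=
    (Finsupp.lmapDomain ℤ ℤ emb) ∘ₗ ((Module.Basis.span hli2).repr : NN →ₗ[ℤ] (↥B₂ →₀ ℤ)) ∘ₗ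
      Submodule.inclusion hHle with hF
  have hFinj : Function.Injective F := by
    have h3 : Function.Injective ⇑(Finsupp.lmapDomain ℤ ℤ emb) := by
      intro p q hpq
      simp only [Finsupp.lmapDomain_apply] at hpq
      exact Finsupp.mapDomain_injective hemb hpq
    rw [hF]
    simp only [LinearMap.coe_comp, LinearEquiv.coe_coe]
    exact h3.comp (((Module.Basis.span hli2).repr.injective).comp
      (Submodule.inclusion_injective hHle))
  have hfree : Module.Free ℤ ↥(AddSubgroup.toIntSubmodule H) := by
    have h1 : Module.Free ℤ ↥(LinearMap.range F) := free_submodule_finsupp_nat _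
    exact Module.Free.of_equiv (LinearEquiv.ofInjective F hFinj).symm
  have e : ↥(AddSubgroup.toIntSubmodule H) ≃ₗ[ℤ] ↥H :=
    { toFun := fun x => ⟨x.1, x.2⟩
      invFun := fun x => ⟨x.1, x.2⟩
      map_add' := fun _ _ => rfl
      map_smul' := fun _ _ => rfl
      left_inv := fun _ => rfl
      right_inv := fun _ => rfl }
  exact Module.Free.of_equiv e
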